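/- Let X be a separable Banach space and let (x_i, f_i) be a locally shrinking Schauder frame of X with projection constant K. Let Y be a finite-dimensional subspace of X. Then for every ε > 0 there exists N ∈ ℕ such that ‖y‖ ≤ (K + ε)‖y + x‖ whenever x ∈ span(x_i : i ≥ N) and y ∈ Y. -/

import Mathlib

open Filter Topology

/-- `sup { |g z| : z ∈ span (x i : i ≥ n), ‖z‖ ≤ 1 }`. -/
noncomputable def tailSupX {X : Type*} [NormedAddCommGroup X] [NormedSpace ℝ X]
    (x : ℕ → X) (g : X →L[ℝ] ℝ) (n : ℕ) : ℝ :=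
  sSup ((fun z : X => |g z|) ''
    {z | z ∈ Submodule.span ℝ (x '' {i | n ≤ i}) ∧ ‖z‖ ≤ 1})

/-- For `z` in the tail span, `|g z| ≤ tailSupX x g N * ‖z‖`. -/
lemma abs_le_tailSupX_mul {X : Type*} [NormedAddCommGroup X] [NormedSpace ℝ X]
    (x : ℕ → X) (g : X →L[ℝ] ℝ) (N : ℕ) (z : X)
    (hz : z ∈ Submodule.span ℝ (x '' {i | N ≤ i})) :
    |g z| ≤ tailSupX x g N * ‖z‖ := by
  have hbdd : BddAbove ((fun z : X => |g z|) ''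
      {z | z ∈ Submodule.span ℝ (x '' {i | N ≤ i}) ∧ ‖z‖ ≤ 1}) := by
    refine ⟨‖g‖, ?_⟩
    rintro a ⟨w, ⟨-, hw⟩, rfl⟩
    calc |g w| = ‖g w‖ := (Real.norm_eq_abs _).symm
    _ ≤ ‖g‖ * ‖w‖ := g.le_opNorm w
    _ ≤ ‖g‖ * 1 := by
        exact mul_le_mul_of_nonneg_left hw (norm_nonneg _)
    _ = ‖g‖ := mul_one _
  rcases eq_or_ne z 0 with rfl | hz0
  · simp
  · have hnz : (0 : ℝ) < ‖z‖ := norm_pos_iff.mpr hz0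
    set u : X := ‖z‖⁻¹ • z with hu
    have humem : u ∈ Submodule.span ℝ (x '' {i | N ≤ i}) := Submodule.smul_mem _ _ hz
    have hunorm : ‖u‖ = 1 := by
      rw [hu, norm_smul, norm_inv, norm_norm, inv_mul_cancel₀ hnz.ne']
    have hle : |g u| ≤ tailSupX x g N :=
      le_csSup hbdd ⟨u, ⟨humem, le_of_eq hunorm⟩, rfl⟩
    have hgu : g u = ‖z‖⁻¹ * g z := by rw [hu, map_smul]; rfl
    have : |g z| = ‖z‖ * |g u| := by
      rw [hgu, abs_mul, abs_inv, abs_norm]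
      field_simp
    rw [this, mul_comm (tailSupX x g N) ‖z‖]
    exact mul_le_mul_of_nonneg_left hle hnz.le

/-- Let `X` be a separable Banach space, `(x i, f i)` a locally shrinking
Schauder frame of `X` with projection constant `K`, and `Y` a finite-dimensional subspace
of `X`. Then for every `ε > 0` there is `N ∈ ℕ` such that `‖y‖ ≤ (K + ε) ‖y + z‖` whenever
`z ∈ span (x i : i ≥ N)` and `y ∈ Y`. -/
theorem schauderFrame_finiteDim_almost_projection
    {X : Type*} [NormedAddCommGroup X] [NormedSpace ℝ X] [CompleteSpace X]
    [TopologicalSpace.SeparableSpace X]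
    (x : ℕ → X) (f : ℕ → X →L[ℝ] ℝ)
    (hx : ∀ i, x i ≠ 0) (hf : ∀ i, f i ≠ 0)
    (hframe : ∀ v : X,
      Tendsto (fun n => ∑ i ∈ Finset.range n, f i v • x i) atTop (𝓝 v))
    (hshr : ∀ m : ℕ, Tendsto (tailSupX x (f m)) atTop (𝓝 0))
    (K : ℝ)
    (hK : IsLUB {r : ℝ | ∃ (v : X) (m n : ℕ), ‖v‖ ≤ 1 ∧ m ≤ n ∧
      r = ‖∑ i ∈ Finset.Icc m n, f i v • x i‖} K)
    (Y : Submodule ℝ X) (hY : FiniteDimensional ℝ Y) :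
    ∀ ε > (0 : ℝ), ∃ N : ℕ, ∀ y ∈ Y, ∀ z ∈ Submodule.span ℝ (x '' {i | N ≤ i}),
      ‖y‖ ≤ (K + ε) * ‖y + z‖ := by
  classical
  intro ε hε
  haveI := hY
  set P : ℕ → X → X := fun n v => ∑ i ∈ Finset.range n, f i v • x i with hPdef
  -- the partial sum operators are bounded by K on the unit ball
  have hPunit : ∀ (n : ℕ) (v : X), ‖v‖ ≤ 1 → ‖P n v‖ ≤ K := by
    intro n v hv
    cases n with
    | zero =>
        simp only [hPdef, Finset.range_zero, Finset.sum_empty, norm_zero]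
        exact hK.1 ⟨0, 0, 0, by simp, le_refl 0, by simp⟩
    | succ k =>
        refine hK.1 ⟨v, 0, k, hv, Nat.zero_le k, ?_⟩
        have : Finset.range (k + 1) = Finset.Icc 0 k := by
          rw [Finset.range_eq_Ico, Finset.Ico_add_one_right_eq_Icc]
        simp only [hPdef, this]
  have hK0 : 0 ≤ K := le_trans (norm_nonneg (P 0 0)) (hPunit 0 0 (by simp))
  -- the partial sum operators are linear and bounded by K
  have hPsub : ∀ (n : ℕ) (a b : X), P n (a - b) = P n a - P n b := by
    intro n a b
    simp only [hPdef, map_sub, sub_smul, Finset.sum_sub_distrib]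
  have hPadd : ∀ (n : ℕ) (a b : X), P n (a + b) = P n a + P n b := by
    intro n a b
    simp only [hPdef, map_add, add_smul, Finset.sum_add_distrib]
  have hPle : ∀ (n : ℕ) (v : X), ‖P n v‖ ≤ K * ‖v‖ := by
    intro n v
    rcases eq_or_ne v 0 with rfl | hv0
    · have : P n (0 : X) = 0 := by simp [hPdef]
      simp [this]
    · have hnv : (0 : ℝ) < ‖v‖ := norm_pos_iff.mpr hv0
      set u : X := ‖v‖⁻¹ • v with hu
      have hunorm : ‖u‖ = 1 := by
        rw [hu, norm_smul, norm_inv, norm_norm, inv_mul_cancel₀ hnv.ne']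
      have hPv : P n v = ‖v‖ • P n u := by
        rw [hu]
        simp only [hPdef, Finset.smul_sum, map_smul, smul_eq_mul, smul_smul]
        congr 1
        ext i
        rw [mul_inv_cancel_left₀ hnv.ne']
      rw [hPv, norm_smul, norm_norm, mul_comm]
      exact mul_le_mul_of_nonneg_right (hPunit n u hunorm.le) hnv.le
  -- K ≥ 1
  have hK1 : 1 ≤ K := by
    set v : X := ‖x 0‖⁻¹ • x 0 with hv
    have hnx : (0 : ℝ) < ‖x 0‖ := norm_pos_iff.mpr (hx 0)
    have hvnorm : ‖v‖ = 1 := by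
      rw [hv, norm_smul, norm_inv, norm_norm, inv_mul_cancel₀ hnx.ne']
    have ht : Tendsto (fun n => ‖P n v‖) atTop (𝓝 ‖v‖) := (hframe v).norm
    rw [hvnorm] at ht
    exact le_of_tendsto' ht fun n => hPunit n v hvnorm.le
  have hKε : (0 : ℝ) < K + ε := by linarith
  -- the constant δ
  set D : ℝ := 1 + (K + ε) * (K + 3) with hD
  have hDpos : (0 : ℝ) < D := by positivity
  set δ : ℝ := ε / D with hδdef
  have hδ : (0 : ℝ) < δ := div_pos hε hDpos
  have hδD : δ * D = ε := div_mul_cancel₀ ε hDpos.ne'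
  -- compact unit sphere of Y and a finite δ-net
  have hScompact : IsCompact ((Y.subtype : Y → X) '' Metric.sphere 0 1) :=
    (isCompact_sphere (0 : Y) 1).image continuous_subtype_val
  obtain ⟨t, htfin, htcover⟩ :=
    Metric.totallyBounded_iff.mp hScompact.totallyBounded δ hδ
  -- choose n ≥ 1 with ‖P n c - c‖ < δ for all c in the net
  have hev : ∀ᶠ n in atTop, ∀ c ∈ t, ‖P n c - c‖ < δ := by
    rw [eventually_all_finite htfin]
    intro c _
    have := (hframe c).eventually (Metric.ball_mem_nhds c hδ)
    filter_upwards [this] with n hn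
    rw [← dist_eq_norm]
    exact Metric.mem_ball.mp hn
  obtain ⟨n₀, hn₀⟩ := eventually_atTop.mp hev
  set n : ℕ := max n₀ 1 with hn
  have hn1 : 1 ≤ n := le_max_right _ _
  have hnet : ∀ c ∈ t, ‖P n c - c‖ < δ := hn₀ n (le_max_left _ _)
  -- choose N so that the tail sups are small
  have hevN : ∀ᶠ N in atTop, ∀ i ∈ Finset.range n,
      tailSupX x (f i) N < δ / (n * ‖x i‖) := by
    rw [Filter.eventually_all_finset]
    intro i _
    have hpos : (0 : ℝ) < δ / (n * ‖x i‖) := by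
      apply div_pos hδ
      have := norm_pos_iff.mpr (hx i)
      positivity
    exact (hshr i).eventually_lt_const hpos
  obtain ⟨N, hN⟩ := hevN.exists
  refine ⟨N, ?_⟩
  -- the tail estimate: ‖P n z‖ ≤ δ * ‖z‖ for z in the tail span
  have htail : ∀ z ∈ Submodule.span ℝ (x '' {i | N ≤ i}), ‖P n z‖ ≤ δ * ‖z‖ := by
    intro z hz
    calc ‖P n z‖ ≤ ∑ i ∈ Finset.range n, ‖f i z • x i‖ := norm_sum_le _ _
    _ = ∑ i ∈ Finset.range n, |f i z| * ‖x i‖ := by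
        simp [norm_smul, Real.norm_eq_abs]
    _ ≤ ∑ i ∈ Finset.range n, (δ / n) * ‖z‖ := by
        apply Finset.sum_le_sum
        intro i hi
        have h1 : |f i z| ≤ tailSupX x (f i) N * ‖z‖ := abs_le_tailSupX_mul x (f i) N z hz
        have h2 : tailSupX x (f i) N ≤ δ / (n * ‖x i‖) := (hN i hi).le
        have hxi : (0 : ℝ) < ‖x i‖ := norm_pos_iff.mpr (hx i)
        have hnpos : (0 : ℝ) < (n : ℝ) := by exact_mod_cast hn1
        calc |f i z| * ‖x i‖ ≤ (tailSupX x (f i) N * ‖z‖) * ‖x i‖ :=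
              mul_le_mul_of_nonneg_right h1 hxi.le
        _ ≤ ((δ / (n * ‖x i‖)) * ‖z‖) * ‖x i‖ := by
            have := mul_le_mul_of_nonneg_right h2 (norm_nonneg z)
            exact mul_le_mul_of_nonneg_right this hxi.le
        _ = (δ / n) * ‖z‖ := by field_simp
    _ = (δ / n) * ‖z‖ * n := by rw [Finset.sum_const, Finset.card_range]; ring
    _ = δ * ‖z‖ := by
        have hnpos : (0 : ℝ) < (n : ℝ) := by exact_mod_cast hn1
        field_simp
  -- main estimate for unit vectors of Y
  have main : ∀ y ∈ Y, ‖y‖ = 1 → ∀ z ∈ Submodule.span ℝ (x '' {i | N ≤ i}),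
      1 ≤ (K + ε) * ‖y + z‖ := by
    intro y hy hy1 z hz
    -- find a net point near y
    have hyS : y ∈ (Y.subtype : Y → X) '' Metric.sphere 0 1 := by
      refine ⟨⟨y, hy⟩, ?_, rfl⟩
      simp only [mem_sphere_iff_norm, sub_zero]
      rw [show ‖(⟨y, hy⟩ : Y)‖ = ‖y‖ from rfl, hy1]
    obtain ⟨c, hct, hyc⟩ := Set.mem_iUnion₂.mp (htcover hyS)
    have hyc' : ‖y - c‖ < δ := by rwa [Metric.mem_ball, dist_eq_norm] at hyc
    -- bound ‖y - P n y‖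
    have h1 : ‖y - P n y‖ ≤ (K + 2) * δ := by
      have e : y - P n y = (y - c) + (c - P n c) + (P n c - P n y) := by abel
      have b3 : ‖P n c - P n y‖ ≤ K * δ := by
        rw [← hPsub]
        calc ‖P n (c - y)‖ ≤ K * ‖c - y‖ := hPle n (c - y)
        _ ≤ K * δ := by
            apply mul_le_mul_of_nonneg_left _ hK0
            rw [norm_sub_rev]
            exact hyc'.le
      have b2 : ‖c - P n c‖ ≤ δ := by rw [norm_sub_rev]; exact (hnet c hct).le
      calc ‖y - P n y‖ ≤ ‖(y - c) + (c - P n c)‖ + ‖P n c - P n y‖ := by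
            rw [e]; exact norm_add_le _ _
      _ ≤ ‖y - c‖ + ‖c - P n c‖ + ‖P n c - P n y‖ := by
            have := norm_add_le (y - c) (c - P n c)
            linarith
      _ ≤ δ + δ + K * δ := by linarith [hyc'.le]
      _ = (K + 2) * δ := by ring
    -- bound ‖P n z‖
    have hznorm : ‖z‖ ≤ ‖y + z‖ + 1 := by
      have : z = (y + z) - y := by abel
      calc ‖z‖ = ‖(y + z) - y‖ := by rw [← this]
      _ ≤ ‖y + z‖ + ‖y‖ := norm_sub_le _ _
      _ = ‖y + z‖ + 1 := by rw [hy1]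
    have h2 : ‖P n z‖ ≤ δ * (‖y + z‖ + 1) :=
      le_trans (htail z hz) (mul_le_mul_of_nonneg_left hznorm hδ.le)
    have h3 : ‖P n (y + z)‖ ≤ K * ‖y + z‖ := hPle n (y + z)
    -- combine
    have hdecomp : y = (y - P n y) + P n (y + z) - P n z := by
      rw [hPadd]; abel
    have hkey : 1 ≤ (K + 2) * δ + K * ‖y + z‖ + δ * (‖y + z‖ + 1) := by
      calc (1 : ℝ) = ‖y‖ := hy1.symm
      _ = ‖(y - P n y) + P n (y + z) - P n z‖ := by rw [← hdecomp]
      _ ≤ ‖(y - P n y) + P n (y + z)‖ + ‖P n z‖ := norm_sub_le _ _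
      _ ≤ ‖y - P n y‖ + ‖P n (y + z)‖ + ‖P n z‖ := by
          linarith [norm_add_le (y - P n y) (P n (y + z))]
      _ ≤ (K + 2) * δ + K * ‖y + z‖ + δ * (‖y + z‖ + 1) := by linarith
    -- arithmetic: conclude 1 ≤ (K + ε) * ‖y + z‖
    set s : ℝ := ‖y + z‖ with hs
    have hs0 : 0 ≤ s := norm_nonneg _
    have hKδ : (0 : ℝ) < K + δ := by linarith
    have hmul : K + δ ≤ ((K + ε) * s) * (K + δ) := by nlinarith [hδD, hkey]
    have := (mul_le_mul_iff_left₀ hKδ).mp (by linarith [hmul] : 1 * (K + δ) ≤ ((K + ε) * s) * (K + δ))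
    linarith
  -- general y by homogeneity
  intro y hy z hz
  rcases eq_or_ne y 0 with rfl | hy0
  · simp only [norm_zero]
    positivity
  · have hny : (0 : ℝ) < ‖y‖ := norm_pos_iff.mpr hy0
    set u : X := ‖y‖⁻¹ • y with hu
    have humem : u ∈ Y := Submodule.smul_mem _ _ hy
    have hunorm : ‖u‖ = 1 := by
      rw [hu, norm_smul, norm_inv, norm_norm, inv_mul_cancel₀ hny.ne']
    set w : X := ‖y‖⁻¹ • z with hw
    have hwmem : w ∈ Submodule.span ℝ (x '' {i | N ≤ i}) := Submodule.smul_mem _ _ hz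
    have h := main u humem hunorm w hwmem
    have huw : u + w = ‖y‖⁻¹ • (y + z) := by rw [hu, hw, smul_add]
    rw [huw, norm_smul, norm_inv, norm_norm] at h
    have h' : ‖y‖ * 1 ≤ ‖y‖ * ((K + ε) * (‖y‖⁻¹ * ‖y + z‖)) :=
      mul_le_mul_of_nonneg_left h hny.le
    rw [mul_one] at h'
    calc ‖y‖ ≤ ‖y‖ * ((K + ε) * (‖y‖⁻¹ * ‖y + z‖)) := h'
    _ = (K + ε) * ‖y + z‖ := by field_simp
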